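/- Let Ω ⊆ ℝⁿ be a nonempty closed convex set, F : ℝⁿ → ℝⁿ monotone and Lipschitz on Ω with constant L, and φ : ℝⁿ → ℝ differentiable and strongly convex with modulus ρ > 0 (so that ⟨∇φ(x) − ∇φ(y), x − y⟩ ≥ ρ‖x − y‖² for all x, y), with ∇φ Lipschitz on Ω with constant M. Fix ε > 0 and β > 0, and suppose x_ε solves VI(T_ε, Ω) where T_ε = F + ε∇φ. Then for every x ∈ Ω, ‖x − x_ε‖ ≤ ((β + L + εM)/(ερ)) · ‖y_β^ε(x) − x‖, where y_β^ε(x) = P_Ω(x − (1/β) T_ε(x)) and P_Ω is the metric projection onto Ω. -/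
import Mathlib


open Set
open scoped InnerProductSpace


lemma proj_vi_aux {E : Type*} [NormedAddCommGroup E] [InnerProductSpace ℝ E]
    {Ω : Set E} (hconv : Convex ℝ Ω) {u yβ : E} (hyβΩ : yβ ∈ Ω)
    (hproj : ∀ z ∈ Ω, ‖u - yβ‖ ≤ ‖u - z‖) :
    ∀ z ∈ Ω, ⟪u - yβ, z - yβ⟫_ℝ ≤ 0 := by
  intro z hz
  by_contra h
  push_neg at h
  set c := ⟪u - yβ, z - yβ⟫_ℝ with hc
  have hzy : z - yβ ≠ 0 := by
    intro h0
    rw [hc, h0, inner_zero_right] at h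
    exact lt_irrefl 0 h
  have hs : (0:ℝ) < ‖z - yβ‖ ^ 2 := pow_pos (norm_pos_iff.mpr hzy) 2
  set s := ‖z - yβ‖ ^ 2 with hsdef
  set t := min 1 (c / s) with ht
  have ht0 : 0 < t := lt_min one_pos (div_pos h hs)
  have ht1 : t ≤ 1 := min_le_left _ _
  have hts : t * s ≤ c := by
    have : t ≤ c / s := min_le_right _ _
    calc t * s ≤ (c / s) * s := by nlinarith
    _ = c := div_mul_cancel₀ c (ne_of_gt hs)
  have hw : yβ + t • (z - yβ) ∈ Ω := by
    have := hconv hyβΩ hz (by linarith : (0:ℝ) ≤ 1 - t) ht0.le (by ring)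
    convert this using 1
    module
  have hkey : ‖u - (yβ + t • (z - yβ))‖ ^ 2 = ‖u - yβ‖ ^ 2 - 2 * t * c + t ^ 2 * s := by
    have he : u - (yβ + t • (z - yβ)) = (u - yβ) - t • (z - yβ) := by module
    rw [he, norm_sub_sq_real, real_inner_smul_right, norm_smul]
    rw [hsdef, hc]
    simp [Real.norm_eq_abs]
    rw [mul_pow, sq_abs]
    ring
  have h1 := hproj _ hw
  have h2 : ‖u - yβ‖ ^ 2 ≤ ‖u - (yβ + t • (z - yβ))‖ ^ 2 := by
    exact pow_le_pow_left₀ (norm_nonneg _) h1 2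
  rw [hkey] at h2
  nlinarith [mul_pos ht0 h, mul_le_mul_of_nonneg_left hts ht0.le]


set_option maxHeartbeats 1000000 in
/-- error bound for a solution of the regularized problem
VI(T_ε, Ω): ‖x − x_ε‖ ≤ ((β + L + εM)/(ερ)) ‖y_β^ε(x) − x‖, where
y_β^ε(x) = P_Ω(x − (1/β) T_ε(x)). -/
theorem error_bound_via_projection_residual {n : ℕ}
    (Ω : Set (EuclideanSpace ℝ (Fin n)))
    (hne : Ω.Nonempty) (hcl : IsClosed Ω) (hconv : Convex ℝ Ω)
    (F : EuclideanSpace ℝ (Fin n) → EuclideanSpace ℝ (Fin n))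
    (hFmono : ∀ x ∈ Ω, ∀ y ∈ Ω, 0 ≤ ⟪F x - F y, x - y⟫_ℝ)
    (L : ℝ) (hFlip : ∀ x ∈ Ω, ∀ y ∈ Ω, ‖F x - F y‖ ≤ L * ‖x - y‖)
    (φ : EuclideanSpace ℝ (Fin n) → ℝ) (hφdiff : Differentiable ℝ φ)
    (ρ : ℝ) (hρ : 0 < ρ)
    -- strong convexity of φ with modulus ρ (gradient strong monotonicity)
    (hφsc : ∀ x y : EuclideanSpace ℝ (Fin n),
      ρ * ‖x - y‖ ^ 2 ≤ ⟪gradient φ x - gradient φ y, x - y⟫_ℝ)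
    (M : ℝ)
    (hgradlip : ∀ x ∈ Ω, ∀ y ∈ Ω, ‖gradient φ x - gradient φ y‖ ≤ M * ‖x - y‖)
    (ε β : ℝ) (hε : 0 < ε) (hβ : 0 < β)
    -- x_ε solves VI(T_ε, Ω) with T_ε = F + ε ∇φ
    (xε : EuclideanSpace ℝ (Fin n)) (hxεΩ : xε ∈ Ω)
    (hxεsol : ∀ y ∈ Ω, 0 ≤ ⟪F xε + ε • gradient φ xε, y - xε⟫_ℝ)
    (x : EuclideanSpace ℝ (Fin n)) (hx : x ∈ Ω)
    -- y_β^ε(x) = P_Ω(x − (1/β) T_ε(x))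
    (yβ : EuclideanSpace ℝ (Fin n)) (hyβΩ : yβ ∈ Ω)
    (hyβproj : ∀ z ∈ Ω,
      ‖x - (1 / β) • (F x + ε • gradient φ x) - yβ‖ ≤
        ‖x - (1 / β) • (F x + ε • gradient φ x) - z‖) :
    ‖x - xε‖ ≤ (β + L + ε * M) / (ε * ρ) * ‖yβ - x‖ := by
  classical
  set g := gradient φ with hg
  set u : EuclideanSpace ℝ (Fin n) := x - (1 / β) • (F x + ε • g x) with hu
  have hproj : ∀ z ∈ Ω, ⟪u - yβ, z - yβ⟫_ℝ ≤ 0 := proj_vi_aux hconv hyβΩ hyβproj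
  have hβne : (β:ℝ) ≠ 0 := ne_of_gt hβ
  rcases eq_or_ne x yβ with hyx | hyx
  · -- x = yβ : x solves VI(T, Ω) itself, so x = xε by strong monotonicity
    subst hyx
    have hVIx : ∀ z ∈ Ω, 0 ≤ ⟪F x + ε • g x, z - x⟫_ℝ := by
      intro z hz
      have h1 := hproj z hz
      have he : ⟪u - x, z - x⟫_ℝ = -((1/β) * ⟪F x + ε • g x, z - x⟫_ℝ) := by
        rw [hu]
        simp only [inner_sub_left, real_inner_smul_left]
        ring
      rw [he] at h1
      have h2 : 0 ≤ (1/β) * ⟪F x + ε • g x, z - x⟫_ℝ := by linarith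
      have h3 := mul_nonneg hβ.le h2
      rw [← mul_assoc, mul_one_div_cancel hβne, one_mul] at h3
      exact h3
    have h1 := hVIx xε hxεΩ
    have h2 := hxεsol x hx
    have hmono := hFmono x hx xε hxεΩ
    have hsc := hφsc x xε
    have hexp : ⟪F x + ε • g x, xε - x⟫_ℝ + ⟪F xε + ε • g xε, x - xε⟫_ℝ
        = -(⟪F x - F xε, x - xε⟫_ℝ + ε * ⟪g x - g xε, x - xε⟫_ℝ) := by
      simp only [inner_sub_left, inner_sub_right, inner_add_left, real_inner_smul_left]
      ring
    have hz : ‖x - xε‖ ^ 2 ≤ 0 := by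
      nlinarith [mul_le_mul_of_nonneg_left hsc hε.le, mul_pos hε hρ, sq_nonneg ‖x - xε‖]
    have h0 : ‖x - xε‖ = 0 := le_antisymm (by nlinarith [norm_nonneg (x - xε)]) (norm_nonneg _)
    rw [h0]
    simp only [sub_self, norm_zero, mul_zero, le_refl]
  · -- main case
    have hr : (0:ℝ) < ‖yβ - x‖ := by
      rw [norm_pos_iff]; exact sub_ne_zero.mpr (Ne.symm hyx)
    have hrx : ‖x - yβ‖ = ‖yβ - x‖ := norm_sub_rev _ _
    have hL : 0 ≤ L := by
      have h1 := hFlip yβ hyβΩ x hx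
      have h2 := norm_nonneg (F yβ - F x)
      nlinarith
    have hM : 0 ≤ M := by
      have h1 := hgradlip yβ hyβΩ x hx
      have h2 := norm_nonneg (g yβ - g x)
      nlinarith
    rcases eq_or_ne x xε with hxx | hxx
    · rw [← hxx]
      simp only [sub_self, norm_zero]
      have : 0 ≤ (β + L + ε * M) / (ε * ρ) :=
        div_nonneg (by nlinarith) (by positivity)
      exact mul_nonneg this (norm_nonneg _)
    · have hd : (0:ℝ) < ‖x - xε‖ := by
        rw [norm_pos_iff]; exact sub_ne_zero.mpr hxx
      set d := ‖x - xε‖ with hdd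
      set r := ‖yβ - x‖ with hrr
      -- A: strong monotonicity of T
      have hA : ε * ρ * d ^ 2 ≤ ⟪(F x + ε • g x) - (F xε + ε • g xε), x - xε⟫_ℝ := by
        have hexp : ⟪(F x + ε • g x) - (F xε + ε • g xε), x - xε⟫_ℝ
            = ⟪F x - F xε, x - xε⟫_ℝ + ε * ⟪g x - g xε, x - xε⟫_ℝ := by
          simp only [inner_sub_left, inner_add_left, real_inner_smul_left]
          ring
        rw [hexp]
        have h1 := hFmono x hx xε hxεΩ
        have h2 := mul_le_mul_of_nonneg_left (hφsc x xε) hε.le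
        nlinarith
      -- B: VI at xε
      have hB := hxεsol yβ hyβΩ
      -- C: from projection inequality with z = xε
      have hC : ⟪F x + ε • g x, yβ - xε⟫_ℝ ≤ β * ⟪x - yβ, yβ - xε⟫_ℝ := by
        have h1 := hproj xε hxεΩ
        have hexp : ⟪u - yβ, xε - yβ⟫_ℝ
            = -⟪x - yβ, yβ - xε⟫_ℝ + (1/β) * ⟪F x + ε • g x, yβ - xε⟫_ℝ := by
          rw [hu]
          simp only [inner_sub_left, inner_sub_right, real_inner_smul_left, inner_add_left]
          ring
        rw [hexp] at h1
        have h2 : (1/β) * ⟪F x + ε • g x, yβ - xε⟫_ℝ ≤ ⟪x - yβ, yβ - xε⟫_ℝ := by linarith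
        calc ⟪F x + ε • g x, yβ - xε⟫_ℝ
            = β * ((1/β) * ⟪F x + ε • g x, yβ - xε⟫_ℝ) := by
              rw [← mul_assoc, mul_one_div_cancel hβne, one_mul]
          _ ≤ β * ⟪x - yβ, yβ - xε⟫_ℝ := mul_le_mul_of_nonneg_left h2 hβ.le
      -- D: Lipschitz bound
      have hD : ⟪(F x + ε • g x) - (F xε + ε • g xε), x - yβ⟫_ℝ ≤ (L + ε * M) * d * r := by
        have hexp : ⟪(F x + ε • g x) - (F xε + ε • g xε), x - yβ⟫_ℝ
            = ⟪F x - F xε, x - yβ⟫_ℝ + ε * ⟪g x - g xε, x - yβ⟫_ℝ := by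
          simp only [inner_sub_left, inner_add_left, real_inner_smul_left]
          ring
        rw [hexp]
        have c1 := real_inner_le_norm (F x - F xε) (x - yβ)
        have c2 := real_inner_le_norm (g x - g xε) (x - yβ)
        have l1 := mul_le_mul_of_nonneg_right (hFlip x hx xε hxεΩ) (norm_nonneg (x - yβ))
        have l2 := mul_le_mul_of_nonneg_right (hgradlip x hx xε hxεΩ) (norm_nonneg (x - yβ))
        have d1 : ⟪F x - F xε, x - yβ⟫_ℝ ≤ L * d * r := by
          rw [hrx] at c1 l1; nlinarith
        have d2 : ε * ⟪g x - g xε, x - yβ⟫_ℝ ≤ ε * (M * d * r) := by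
          apply mul_le_mul_of_nonneg_left _ hε.le
          rw [hrx] at c2 l2; nlinarith
        nlinarith
      -- E: cross term bound
      have hE : β * ⟪x - yβ, yβ - xε⟫_ℝ ≤ β * (r * d) := by
        apply mul_le_mul_of_nonneg_left _ hβ.le
        have hexp : ⟪x - yβ, yβ - xε⟫_ℝ
            = -(‖x - yβ‖ ^ 2) + ⟪x - yβ, x - xε⟫_ℝ := by
          have h4 : yβ - xε = -(x - yβ) + (x - xε) := by abel
          rw [h4, inner_add_right, inner_neg_right, real_inner_self_eq_norm_sq]
        have c1 := real_inner_le_norm (x - yβ) (x - xε)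
        rw [hrx] at c1 hexp
        rw [hexp]
        nlinarith [sq_nonneg r]
      -- combine
      have hid : ⟪(F x + ε • g x) - (F xε + ε • g xε), x - xε⟫_ℝ
          = ⟪(F x + ε • g x) - (F xε + ε • g xε), x - yβ⟫_ℝ
            + ⟪F x + ε • g x, yβ - xε⟫_ℝ - ⟪F xε + ε • g xε, yβ - xε⟫_ℝ := by
        simp only [inner_sub_left, inner_sub_right, inner_add_left, real_inner_smul_left]
        ring
      have hfinal : ε * ρ * d ^ 2 ≤ (β + L + ε * M) * r * d := by nlinarith
      rw [div_mul_eq_mul_div, le_div_iff₀ (by positivity : (0:ℝ) < ε * ρ)]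
      nlinarith
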